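/- Let a > 0 and consider events in (d+1)-dimensional Minkowski spacetime (d ≥ 2): (x_A,t_A) = ((-a,0,...,0), 0), (x_C,t_C) = ((a,0,...,0), 0), and (x_B,t_B) = ((x_B, y_B, 0,...,0), t_B) with -a ≤ x_B ≤ a. Then L_>(x_A,t_A) ∩ L_>(x_C,t_C) ⊆ L_>(x_B,t_B) if and only if t_B ≤ -|y_B|. -/

import Mathlib

/-- The (strict) future lightcone of an event in (d+1)D Minkowski spacetime. -/
def futureCone {d : ℕ} (x0 : EuclideanSpace ℝ (Fin d)) (t0 : ℝ) :
    Set (EuclideanSpace ℝ (Fin d) × ℝ) :=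
  {p | ‖p.1 - x0‖ ≤ p.2 - t0 ∧ t0 < p.2}

open EuclideanSpace Real
open scoped RealInnerProductSpace

lemma single_add' {d : ℕ} (i : Fin d) (u v : ℝ) :
    single i u + single i v = single i (u + v) := by
  ext j; simp [single_apply]; split <;> simp

lemma single_neg' {d : ℕ} (i : Fin d) (u : ℝ) :
    -single i u = single i (-u) := by
  ext j; simp [single_apply]; split <;> simp

lemma single_smul' {d : ℕ} (i : Fin d) (c u : ℝ) :
    c • (single i u : EuclideanSpace ℝ (Fin d)) = single i (c * u) := by
  ext j; simp [single_apply]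

lemma norm_single_add_single {d : ℕ} {i j : Fin d} (hij : i ≠ j) (u v : ℝ) :
    ‖(single i u + single j v : EuclideanSpace ℝ (Fin d))‖ = Real.sqrt (u^2 + v^2) := by
  have h : ⟪(single i u : EuclideanSpace ℝ (Fin d)), single j v⟫ = 0 := by
    rw [EuclideanSpace.inner_single_left]
    simp [single_apply, hij]
  have h2 := norm_add_sq_real (single i u : EuclideanSpace ℝ (Fin d)) (single j v)
  rw [h, norm_single, norm_single] at h2
  rw [← Real.sqrt_sq (norm_nonneg (single i u + single j v)), h2]
  simp [Real.norm_eq_abs, sq_abs]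

lemma abs_apply_le_norm' {d : ℕ} (w : EuclideanSpace ℝ (Fin d)) (j : Fin d) :
    |w j| ≤ ‖w‖ := by
  have h : ⟪(single j (1:ℝ) : EuclideanSpace ℝ (Fin d)), w⟫ = w j := by
    rw [EuclideanSpace.inner_single_left]; simp
  calc |w j| = |⟪(single j (1:ℝ) : EuclideanSpace ℝ (Fin d)), w⟫| := by rw [h]
    _ ≤ ‖(single j (1:ℝ) : EuclideanSpace ℝ (Fin d))‖ * ‖w‖ := abs_real_inner_le_norm _ _
    _ = ‖w‖ := by rw [norm_single]; simp

/-- For `x_A = (-a,0,…,0)`, `x_C = (a,0,…,0)` at time `0` and `x_B = (x_B, y_B, 0,…,0)` with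
`-a ≤ x_B ≤ a`, the intersection of the future lightcones of the first two events is contained
in the future lightcone of `(x_B, t_B)` iff `t_B ≤ -|y_B|`. -/
theorem inter_subset_cone_iff_of_between {d : ℕ} (hd : 2 ≤ d) (a xB yB tB : ℝ)
    (ha : 0 < a) (hx1 : -a ≤ xB) (hx2 : xB ≤ a) :
    (futureCone (EuclideanSpace.single (⟨0, by omega⟩ : Fin d) (-a)) 0 ∩
       futureCone (EuclideanSpace.single (⟨0, by omega⟩ : Fin d) a) 0 ⊆
     futureCone
       (EuclideanSpace.single (⟨0, by omega⟩ : Fin d) xB +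
        EuclideanSpace.single (⟨1, by omega⟩ : Fin d) yB) tB)
    ↔ tB ≤ -|yB| := by
  have h0d : (0:ℕ) < d := by omega
  have h1d : (1:ℕ) < d := by omega
  set i0 : Fin d := ⟨0, h0d⟩ with hi0
  set i1 : Fin d := ⟨1, h1d⟩ with hi1
  have hne : i0 ≠ i1 := by simp [hi0, hi1, Fin.ext_iff]
  show (futureCone (single i0 (-a)) 0 ∩ futureCone (single i0 a) 0 ⊆
      futureCone (single i0 xB + single i1 yB) tB) ↔ tB ≤ -|yB|
  constructor
  · intro h
    by_contra hc
    push_neg at hc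
    set c := tB + |yB| with hcdef
    have hcpos : 0 < c := by simp [hcdef]; linarith
    have key : ∀ S : ℝ, 0 < S → c ≤ Real.sqrt (a^2 + S^2) - S := by
      intro S hS
      set s : ℝ := if 0 ≤ yB then -S else S with hsdef
      have habs : |s - yB| = S + |yB| := by
        rcases le_or_gt 0 yB with hy | hy
        · rw [hsdef, if_pos hy, abs_of_nonpos (by linarith), abs_of_nonneg hy]; ring
        · rw [hsdef, if_neg (not_le.mpr hy), abs_of_nonneg (by linarith),
            abs_of_neg hy]; ring
      have hs2 : s^2 = S^2 := by rw [hsdef]; split <;> ring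
      set t := Real.sqrt (a^2 + S^2) with htdef
      have ht : 0 < t := Real.sqrt_pos.mpr (by positivity)
      have hmem : (single i1 s, t) ∈
          futureCone (single i0 (-a)) 0 ∩ futureCone (single i0 a) 0 := by
        constructor
        · refine ⟨?_, ht⟩
          have : (single i1 s : EuclideanSpace ℝ (Fin d)) - single i0 (-a)
              = single i0 a + single i1 s := by
            rw [sub_eq_add_neg, single_neg', neg_neg, add_comm]
          rw [this, norm_single_add_single hne, hs2]
          simp [htdef]
        · refine ⟨?_, ht⟩
          have : (single i1 s : EuclideanSpace ℝ (Fin d)) - single i0 a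
              = single i0 (-a) + single i1 s := by
            rw [sub_eq_add_neg, single_neg', add_comm]
          rw [this, norm_single_add_single hne, hs2]
          simp [htdef, neg_sq]
      obtain ⟨hB, -⟩ := h hmem
      have hval : ((single i1 s : EuclideanSpace ℝ (Fin d))
          - (single i0 xB + single i1 yB)) i1 = s - yB := by
        simp [single_apply, Ne.symm hne]
      have hcomp : |s - yB| ≤ ‖(single i1 s : EuclideanSpace ℝ (Fin d))
          - (single i0 xB + single i1 yB)‖ := by
        have h3 := abs_apply_le_norm'
          ((single i1 s : EuclideanSpace ℝ (Fin d)) - (single i0 xB + single i1 yB)) i1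
        rwa [hval] at h3
      simp only [] at hB
      rw [habs] at hcomp
      have : S + |yB| ≤ t - tB := le_trans hcomp hB
      simp only [hcdef]
      linarith
    -- now derive contradiction
    have hS : 0 < a^2 / c := by positivity
    have h1 := key _ hS
    have hac : (0:ℝ) < a^2/c := hS
    have hsqrt : Real.sqrt (a^2 + (a^2/c)^2) ≤ a^2/c + c/2 := by
      rw [← Real.sqrt_sq (by positivity : (0:ℝ) ≤ a^2/c + c/2)]
      apply Real.sqrt_le_sqrt
      have hcross : (a^2/c) * c = a^2 := div_mul_cancel₀ _ (ne_of_gt hcpos)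
      nlinarith [sq_nonneg c]
    linarith
  · intro htB p hp
    obtain ⟨⟨hA, hA0⟩, hC, -⟩ := hp
    have hyB : (0:ℝ) ≤ |yB| := abs_nonneg _
    refine ⟨?_, by linarith⟩
    set lam := (a - xB)/(2*a) with hlam
    set mu := (a + xB)/(2*a) with hmu
    have hlm : lam + mu = 1 := by rw [hlam, hmu, ← add_div, div_eq_one_iff_eq (by positivity)]; ring
    have hlam0 : 0 ≤ lam := div_nonneg (by linarith) (by linarith)
    have hmu0 : 0 ≤ mu := div_nonneg (by linarith) (by linarith)
    have hdecomp : p.1 - single i0 xB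
        = lam • (p.1 - single i0 (-a)) + mu • (p.1 - single i0 a) := by
      have h1 : lam • (p.1 - single i0 (-a)) + mu • (p.1 - single i0 a)
          = (lam + mu) • p.1 - (lam • single i0 (-a) + mu • single i0 a) := by
        module
      have hval2 : lam * (-a) + mu * a = xB := by
        rw [hlam, hmu]; field_simp; ring
      rw [h1, single_smul', single_smul', single_add', hval2, hlm, one_smul]
    have hmid : ‖p.1 - single i0 xB‖ ≤ p.2 := by
      rw [hdecomp]
      calc ‖lam • (p.1 - single i0 (-a)) + mu • (p.1 - single i0 a)‖
          ≤ ‖lam • (p.1 - single i0 (-a))‖ + ‖mu • (p.1 - single i0 a)‖ := norm_add_le _ _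
        _ = lam * ‖p.1 - single i0 (-a)‖ + mu * ‖p.1 - single i0 a‖ := by
            rw [norm_smul, norm_smul, Real.norm_eq_abs, Real.norm_eq_abs,
              abs_of_nonneg hlam0, abs_of_nonneg hmu0]
        _ ≤ lam * (p.2 - 0) + mu * (p.2 - 0) := by
            gcongr
        _ = (lam + mu) * p.2 := by ring
        _ = p.2 := by rw [hlm, one_mul]
    calc ‖p.1 - (single i0 xB + single i1 yB)‖
        = ‖(p.1 - single i0 xB) - single i1 yB‖ := by rw [sub_add_eq_sub_sub]
      _ ≤ ‖p.1 - single i0 xB‖ + ‖(single i1 yB : EuclideanSpace ℝ (Fin d))‖ :=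
          norm_sub_le _ _
      _ = ‖p.1 - single i0 xB‖ + |yB| := by rw [norm_single, Real.norm_eq_abs]
      _ ≤ p.2 + |yB| := by linarith
      _ ≤ p.2 - tB := by linarith
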